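/- Let X be a finite ergodic reversible Markov chain with spectral gap γ, and let A be a nonempty proper subset of its state space. The collapsed chain X* obtained by merging the complement of A into a single state a (with transitions weighted by the stationary distribution) satisfies γ(X*) ≥ γ(X). -/
import Mathlib


open Finset

/-- Dirichlet form `ℰ_{P,π}(f) = (1/2) Σ_{x,y} (f x - f y)^2 π x P x y`. -/
noncomputable def dirichletForm {V : Type*} [Fintype V] (P : Matrix V V ℝ) (π f : V → ℝ) : ℝ :=
  (1 / 2) * ∑ x, ∑ y, (f x - f y) ^ 2 * (π x * P x y)

/-- Variance of `f` under `π`. -/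
noncomputable def piVar {V : Type*} [Fintype V] (π f : V → ℝ) : ℝ :=
  ∑ x, π x * (f x - ∑ y, π y * f y) ^ 2

/-- Spectral gap of a reversible chain, via the variational characterization. -/
noncomputable def spectralGap {V : Type*} [Fintype V] (P : Matrix V V ℝ) (π : V → ℝ) : ℝ :=
  sInf {r : ℝ | ∃ f : V → ℝ, piVar π f ≠ 0 ∧ r = dirichletForm P π f / piVar π f}

/-- The transition matrix of the chain collapsed with respect to `A`: the states
outside `A` are merged into the single extra state `Sum.inr ()`. -/
noncomputable def collapsedP {V : Type*} [Fintype V] (P : Matrix V V ℝ) (π : V → ℝ)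
    (A : Set V) [DecidablePred (· ∈ A)] : Matrix (↥A ⊕ Unit) (↥A ⊕ Unit) ℝ :=
  fun x y => match x, y with
  | Sum.inl u, Sum.inl v => P u v
  | Sum.inl u, Sum.inr _ => ∑ v ∈ Finset.univ.filter (fun v => v ∉ A), P u v
  | Sum.inr _, Sum.inl v =>
      (∑ u ∈ Finset.univ.filter (fun u => u ∉ A), π u * P u v)
        / ∑ u ∈ Finset.univ.filter (fun u => u ∉ A), π u
  | Sum.inr _, Sum.inr _ =>
      (∑ u ∈ Finset.univ.filter (fun u => u ∉ A),
          ∑ v ∈ Finset.univ.filter (fun v => v ∉ A), π u * P u v)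
        / ∑ u ∈ Finset.univ.filter (fun u => u ∉ A), π u

/-- The stationary distribution of the collapsed chain. -/
noncomputable def collapsedPi {V : Type*} [Fintype V] (π : V → ℝ)
    (A : Set V) [DecidablePred (· ∈ A)] : (↥A ⊕ Unit) → ℝ :=
  fun x => match x with
  | Sum.inl u => π u
  | Sum.inr _ => ∑ u ∈ Finset.univ.filter (fun u => u ∉ A), π u


/-- Lift a function on the collapsed state space to the original state space. -/
noncomputable def liftFun {V : Type*} (A : Set V) [DecidablePred (· ∈ A)]
    (g : ↥A ⊕ Unit → ℝ) : V → ℝ :=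
  fun v => if h : v ∈ A then g (Sum.inl ⟨v, h⟩) else g (Sum.inr ())

lemma lift_sum {V : Type*} [Fintype V] (π : V → ℝ) (A : Set V) [DecidablePred (· ∈ A)]
    (g : ↥A ⊕ Unit → ℝ) (F : ℝ → ℝ) :
    ∑ x, collapsedPi π A x * F (g x) = ∑ v, π v * F (liftFun A g v) := by
  rw [Fintype.sum_sum_type,
    ← Finset.sum_filter_add_sum_filter_not Finset.univ (fun v => v ∈ A)
      (fun v => π v * F (liftFun A g v))]
  congr 1
  · rw [Finset.sum_subtype (p := fun v => v ∈ A) _ (fun x => by simp)]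
    refine Finset.sum_congr rfl fun u _ => ?_
    simp [liftFun, collapsedPi, u.2]
  · have : ∀ v ∈ Finset.univ.filter (fun v => ¬ v ∈ A),
        π v * F (liftFun A g v) = π v * F (g (Sum.inr ())) := by
      intro v hv
      simp only [Finset.mem_filter] at hv
      simp [liftFun, hv.2]
    rw [Finset.sum_congr rfl this, ← Finset.sum_mul]
    simp [collapsedPi]

lemma var_eq {V : Type*} [Fintype V] (π : V → ℝ) (A : Set V) [DecidablePred (· ∈ A)]
    (g : ↥A ⊕ Unit → ℝ) :
    piVar (collapsedPi π A) g = piVar π (liftFun A g) := by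
  have hm : ∑ y, collapsedPi π A y * g y = ∑ y, π y * liftFun A g y := by
    simpa using lift_sum π A g id
  unfold piVar
  rw [hm]
  exact lift_sum π A g (fun t => (t - ∑ y, π y * liftFun A g y) ^ 2)

lemma dir_eq {V : Type*} [Fintype V] (P : Matrix V V ℝ) (π : V → ℝ)
    (A : Set V) [DecidablePred (· ∈ A)]
    (hπC : (∑ u ∈ Finset.univ.filter (fun u => u ∉ A), π u) ≠ 0)
    (g : ↥A ⊕ Unit → ℝ) :
    dirichletForm (collapsedP P π A) (collapsedPi π A) g = dirichletForm P π (liftFun A g) := by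
  classical
  set A' : Finset V := Finset.univ.filter (fun v => v ∈ A) with hA'
  set C : Finset V := Finset.univ.filter (fun v => ¬ v ∈ A) with hC
  set f : V → ℝ := liftFun A g with hf
  have hfA : ∀ u : ↥A, f u = g (Sum.inl u) := fun u => by simp [hf, liftFun, u.2]
  have hfC : ∀ (y : Unit), ∀ v ∈ C, f v = g (Sum.inr y) := fun y v hv => by
    simp only [hC, Finset.mem_filter] at hv
    simp [hf, liftFun, hv.2]
  have hcan : ∀ T : ℝ, (∑ u ∈ C, π u) * (T / ∑ u ∈ C, π u) = T :=
    fun T => mul_div_cancel₀ T hπC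
  unfold dirichletForm
  congr 1
  have hsplit : ∀ q : V → V → ℝ, ∑ x, ∑ y, q x y =
      ((∑ x ∈ A', ∑ y ∈ A', q x y) + (∑ x ∈ A', ∑ y ∈ C, q x y)) +
      ((∑ x ∈ C, ∑ y ∈ A', q x y) + (∑ x ∈ C, ∑ y ∈ C, q x y)) := by
    intro q
    rw [← Finset.sum_filter_add_sum_filter_not Finset.univ (fun v => v ∈ A)
      (fun x => ∑ y, q x y)]
    congr 1 <;>
    · rw [← Finset.sum_add_distrib]
      exact Finset.sum_congr rfl fun x _ =>
        (Finset.sum_filter_add_sum_filter_not Finset.univ (fun v => v ∈ A) _).symm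
  have e11 : ∑ x ∈ A', ∑ y ∈ A', (f x - f y) ^ 2 * (π x * P x y)
      = ∑ u : ↥A, ∑ v : ↥A, (g (Sum.inl u) - g (Sum.inl v)) ^ 2 * (π u * P u v) := by
    rw [Finset.sum_subtype (p := fun v => v ∈ A) _ (fun x => by simp [hA'])]
    refine Finset.sum_congr rfl fun u _ => ?_
    rw [Finset.sum_subtype (p := fun v => v ∈ A) _ (fun x => by simp [hA'])]
    exact Finset.sum_congr rfl fun v _ => by rw [hfA u, hfA v]
  have e12 : ∀ y : Unit, ∑ x ∈ A', ∑ z ∈ C, (f x - f z) ^ 2 * (π x * P x z)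
      = ∑ u : ↥A, (g (Sum.inl u) - g (Sum.inr y)) ^ 2 * (π u * ∑ z ∈ C, P u z) := by
    intro y
    rw [Finset.sum_subtype (p := fun v => v ∈ A) _ (fun x => by simp [hA'])]
    refine Finset.sum_congr rfl fun u _ => ?_
    rw [Finset.sum_congr rfl (fun z hz => by rw [hfA u, hfC y z hz]), ← Finset.mul_sum,
      ← Finset.mul_sum]
  have e21 : ∀ y : Unit, ∑ x ∈ C, ∑ z ∈ A', (f x - f z) ^ 2 * (π x * P x z)
      = ∑ v : ↥A, (g (Sum.inr y) - g (Sum.inl v)) ^ 2 * (∑ x ∈ C, π x * P x v) := by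
    intro y
    rw [Finset.sum_comm,
      Finset.sum_subtype (p := fun v => v ∈ A) _ (fun x => by simp [hA'])]
    refine Finset.sum_congr rfl fun v _ => ?_
    rw [Finset.sum_congr rfl (fun x hx => by rw [hfC y x hx, hfA v]), ← Finset.mul_sum]
  have e22 : ∑ x ∈ C, ∑ z ∈ C, (f x - f z) ^ 2 * (π x * P x z) = 0 := by
    refine Finset.sum_eq_zero fun x hx => Finset.sum_eq_zero fun z hz => ?_
    rw [hfC () x hx, hfC () z hz]
    ring
  rw [hsplit, e11, e12 (), e21 (), e22]
  have hPc11 : ∀ u v : ↥A, collapsedP P π A (Sum.inl u) (Sum.inl v) = P u v := fun _ _ => rfl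
  have hPc12 : ∀ (u : ↥A) (y : Unit),
      collapsedP P π A (Sum.inl u) (Sum.inr y) = ∑ z ∈ C, P u z := fun _ _ => rfl
  have hPc21 : ∀ (y : Unit) (v : ↥A), collapsedP P π A (Sum.inr y) (Sum.inl v)
      = (∑ x ∈ C, π x * P x v) / ∑ x ∈ C, π x := fun _ _ => rfl
  have hπc1 : ∀ u : ↥A, collapsedPi π A (Sum.inl u) = π u := fun _ => rfl
  have hπc2 : ∀ y : Unit, collapsedPi π A (Sum.inr y) = ∑ x ∈ C, π x := fun _ => rfl
  simp only [hPc11, hPc12, hPc21, hπc1, hπc2, Fintype.sum_sum_type, Fintype.sum_unique,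
    sub_self, ne_eq, zero_pow, zero_mul, add_zero, OfNat.ofNat_ne_zero, not_false_iff]
  simp only [hcan]
  rw [Finset.sum_add_distrib]

/-- Aldous–Fill Corollary 3.27: collapsing the complement of a nonempty
proper subset `A` of the state space of a finite ergodic reversible chain does not decrease
the spectral gap. -/
theorem stmt14 {V : Type*} [Fintype V] [DecidableEq V]
    (P : Matrix V V ℝ) (π : V → ℝ)
    (hπpos : ∀ x, 0 < π x) (hπ1 : ∑ x, π x = 1)
    (hP0 : ∀ x y, 0 ≤ P x y) (hP1 : ∀ x, ∑ y, P x y = 1)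
    (hrev : ∀ x y, π x * P x y = π y * P y x)
    (hergodic : ∀ x y : V, ∃ n : ℕ, 0 < (P ^ n) x y)
    (A : Set V) [DecidablePred (· ∈ A)] (hA : A.Nonempty) (hAne : A ≠ Set.univ) :
    spectralGap P π ≤ spectralGap (collapsedP P π A) (collapsedPi π A) := by
  classical
  obtain ⟨w, hw⟩ : ∃ w, w ∉ A := by
    by_contra h
    push_neg at h
    exact hAne (Set.eq_univ_iff_forall.mpr h)
  obtain ⟨a0, ha0⟩ := hA
  have hπC : 0 < ∑ u ∈ Finset.univ.filter (fun u => u ∉ A), π u :=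
    Finset.sum_pos' (fun i _ => (hπpos i).le)
      ⟨w, Finset.mem_filter.mpr ⟨Finset.mem_univ w, hw⟩, hπpos w⟩
  have hlb : ∀ r ∈ {r : ℝ | ∃ f : V → ℝ, piVar π f ≠ 0 ∧ r = dirichletForm P π f / piVar π f},
      0 ≤ r := by
    rintro r ⟨f, hf, rfl⟩
    apply div_nonneg
    · unfold dirichletForm
      refine mul_nonneg (by norm_num) ?_
      refine Finset.sum_nonneg fun x _ => Finset.sum_nonneg fun y _ => ?_
      exact mul_nonneg (sq_nonneg _) (mul_nonneg (hπpos x).le (hP0 x y))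
    · exact Finset.sum_nonneg fun x _ => mul_nonneg (hπpos x).le (sq_nonneg _)
  have hvar_pos : ∀ f : V → ℝ, f a0 ≠ f w → piVar π f ≠ 0 := by
    intro f hne h0
    have hterm := (Finset.sum_eq_zero_iff_of_nonneg
      (fun x _ => mul_nonneg (hπpos x).le (sq_nonneg _))).mp h0
    have h1 : ∀ x : V, f x = ∑ y, π y * f y := by
      intro x
      have hx := hterm x (Finset.mem_univ x)
      rcases mul_eq_zero.mp hx with h | h
      · exact absurd h (hπpos x).ne'
      · have : f x - ∑ y, π y * f y = 0 := sq_eq_zero_iff.mp h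
        linarith
    exact hne (by rw [h1 a0, h1 w])
  apply le_csInf
  · refine ⟨_, Sum.elim 0 1, ?_, rfl⟩
    rw [var_eq]
    apply hvar_pos
    simp [liftFun, ha0, hw]
  · rintro r ⟨g, hg, rfl⟩
    apply csInf_le ⟨0, hlb⟩
    exact ⟨liftFun A g, by rw [← var_eq]; exact hg,
      by rw [← var_eq, ← dir_eq P π A hπC.ne' g]⟩
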